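/- Every decomposable (chordal) graph is a Generalized Bartlett graph. -/

import Mathlib

open SimpleGraph

variable {V : Type*}

/-- One step of the elimination/triangulation process: at step `k` (0-based) the vertex with
label `k` is eliminated, and all pairs of its neighbours with larger labels are joined. -/
def triStep {n : ℕ} (σ : V ≃ Fin n) (H : SimpleGraph V) (k : ℕ) : SimpleGraph V where
  Adj u v := H.Adj u v ∨
    (u ≠ v ∧ ∃ hk : k < n, k < (σ u : ℕ) ∧ k < (σ v : ℕ) ∧
      H.Adj u (σ.symm ⟨k, hk⟩) ∧ H.Adj v (σ.symm ⟨k, hk⟩))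
  symm := ⟨by
    rintro u v (h | ⟨hne, hk, h1, h2, h3, h4⟩)
    · exact Or.inl h.symm
    · exact Or.inr ⟨hne.symm, hk, h2, h1, h4, h3⟩⟩
  loopless := ⟨by
    rintro u (h | ⟨hne, _⟩)
    · exact H.irrefl h
    · exact hne rfl⟩

/-- The sequence of graphs `E_0, E_1, …` in the triangulation process. -/
def triSeq {n : ℕ} (σ : V ≃ Fin n) (G : SimpleGraph V) : ℕ → SimpleGraph V
  | 0 => G
  | k + 1 => triStep σ (triSeq σ G k) k

/-- The triangulation `D^σ(G)` of `G` under the ordering `σ` (`p − 2` elimination steps). -/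
def triangulation {n : ℕ} (σ : V ≃ Fin n) (G : SimpleGraph V) : SimpleGraph V :=
  triSeq σ G (n - 2)

/-- `σ` is a perfect elimination ordering of `G`: for every `j`, the vertex `σ⁻¹(j)` together
with its higher-labelled neighbours forms a clique. -/
def IsPerfectElimOrdering {n : ℕ} (σ : V ≃ Fin n) (G : SimpleGraph V) : Prop :=
  ∀ j : Fin n,
    G.IsClique ({σ.symm j} ∪ {v : V | (j : ℕ) < (σ v : ℕ) ∧ G.Adj v (σ.symm j)})

/-- A graph is decomposable (chordal) if it has no induced cycle of length `≥ 4`. -/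
def IsDecomposable (G : SimpleGraph V) : Prop :=
  ∀ n : ℕ, 4 ≤ n → IsEmpty (SimpleGraph.cycleGraph n ↪g G)

/-- `σ` is a Generalized Bartlett ordering of `G`: no triangle of `D^σ(G)` consists of three
non-edges of `G`. -/
def IsGBOrdering {n : ℕ} (σ : V ≃ Fin n) (G : SimpleGraph V) : Prop :=
  ¬ ∃ u v w : V,
      ¬ G.Adj u v ∧ ¬ G.Adj v w ∧ ¬ G.Adj u w ∧
      (triangulation σ G).Adj u v ∧ (triangulation σ G).Adj v w ∧
      (triangulation σ G).Adj u w

/-- `G` is a Generalized Bartlett graph: it admits a Generalized Bartlett ordering. -/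
def IsGB (G : SimpleGraph V) : Prop :=
  ∃ (n : ℕ) (σ : V ≃ Fin n), IsGBOrdering σ G

section Part1

variable {n : ℕ}

theorem triStep_eq_of_peo {G : SimpleGraph V} {σ : V ≃ Fin n}
    (h : IsPerfectElimOrdering σ G) (k : ℕ) : triStep σ G k = G := by
  ext u v
  constructor
  · rintro (h' | ⟨hne, hk, h1, h2, h3, h4⟩)
    · exact h'
    · have := h ⟨k, hk⟩
      refine this (Set.mem_union_right _ ?_) (Set.mem_union_right _ ?_) hne
      · exact ⟨h1, h3⟩
      · exact ⟨h2, h4⟩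
  · exact Or.inl

theorem triSeq_eq_of_peo {G : SimpleGraph V} {σ : V ≃ Fin n}
    (h : IsPerfectElimOrdering σ G) (k : ℕ) : triSeq σ G k = G := by
  induction k with
  | zero => rfl
  | succ k ih => rw [triSeq, ih, triStep_eq_of_peo h]

theorem isGBOrdering_of_peo {G : SimpleGraph V} {σ : V ≃ Fin n}
    (h : IsPerfectElimOrdering σ G) : IsGBOrdering σ G := by
  rintro ⟨u, v, w, h1, _, _, h4, _, _⟩
  rw [triangulation, triSeq_eq_of_peo h] at h4
  exact h1 h4

end Part1

section Part2a

/-- A vertex is simplicial if its neighbourhood is a clique. -/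
def IsSimplicial (G : SimpleGraph V) (v : V) : Prop := G.IsClique (G.neighborSet v)

theorem isDecomposable_comap {V' : Type*} (f : V' ↪ V) {G : SimpleGraph V}
    (hdec : IsDecomposable G) : IsDecomposable (G.comap f) := by
  intro n hn
  exact ⟨fun emb => (hdec n hn).false ((SimpleGraph.Embedding.comap f G).comp emb)⟩

end Part2a

section Part3a

/-- A walk of length `m` from `x` to `y` whose interior vertices lie in `T`. -/
def Wk (G : SimpleGraph V) (T : Set V) (x y : V) (m : ℕ) (f : ℕ → V) : Prop :=
  f 0 = x ∧ f m = y ∧ (∀ i, i < m → G.Adj (f i) (f (i+1))) ∧ (∀ i, 0 < i → i < m → f i ∈ T)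

theorem exists_induced_walk {G : SimpleGraph V} {T : Set V} {x y : V}
    (hxy : ¬ G.Adj x y) (hyT : y ∉ T) (hne : x ≠ y)
    (hex : ∃ m f, Wk G T x y m f) :
    ∃ m f, Wk G T x y m f ∧ 2 ≤ m ∧
      (∀ i j, i < j → j ≤ m → (G.Adj (f i) (f j) ↔ j = i + 1)) ∧
      (∀ i j, i < j → j ≤ m → f i ≠ f j) := by
  classical
  have hex' : ∃ m, ∃ f, Wk G T x y m f := hex
  obtain ⟨m0, ⟨f, hf0, hfm, hfadj, hfT⟩, hmin⟩ :
      ∃ m0, (∃ f, Wk G T x y m0 f) ∧ ∀ m', m' < m0 → ¬ ∃ g, Wk G T x y m' g :=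
    ⟨Nat.find hex', Nat.find_spec hex', fun m' h => Nat.find_min hex' h⟩
  -- injectivity
  have hinj : ∀ i j, i < j → j ≤ m0 → f i ≠ f j := by
    intro i j hij hjm heq
    set d := j - i with hd
    have hd1 : 1 ≤ d := by omega
    set m' := m0 - d with hm'
    set f' : ℕ → V := fun t => if t ≤ i then f t else f (t + d) with hf'
    apply hmin m' (by omega)
    refine ⟨f', ?_, ?_, ?_, ?_⟩
    · simp only [hf', if_pos (Nat.zero_le i)]
      exact hf0
    · by_cases h : m' ≤ i
      · have hh : m' = i ∧ j = m0 := by omega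
        simp only [hf', if_pos h, hh.1, if_pos le_rfl]
        rw [heq, hh.2]
        exact hfm
      · simp only [hf', if_neg h]
        have : m' + d = m0 := by omega
        rw [this, hfm]
    · intro t ht
      by_cases h1 : t + 1 ≤ i
      · simp only [hf', if_pos h1, if_pos (by omega : t ≤ i)]
        exact hfadj t (by omega)
      · by_cases h2 : t ≤ i
        · -- t = i, t+1 = i+1 > i
          have hti : t = i := by omega
          simp only [hf', if_pos h2, if_neg h1]
          rw [hti, heq]
          have : i + 1 + d = j + 1 := by omega
          rw [this]
          exact hfadj j (by omega)
        · simp only [hf', if_neg h2, if_neg h1]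
          have : t + 1 + d = t + d + 1 := by omega
          rw [this]
          exact hfadj (t + d) (by omega)
    · intro t ht0 htm
      by_cases h : t ≤ i
      · simp only [hf', if_pos h]
        exact hfT t ht0 (by omega)
      · simp only [hf', if_neg h]
        exact hfT (t + d) (by omega) (by omega)
  -- no chords
  have hchord : ∀ i j, i < j → j ≤ m0 → G.Adj (f i) (f j) → j = i + 1 := by
    intro i j hij hjm hadj
    by_contra hne2
    have hij2 : i + 2 ≤ j := by omega
    set d := j - i - 1 with hd
    have hd1 : 1 ≤ d := by omega
    set m' := m0 - d with hm'
    set f' : ℕ → V := fun t => if t ≤ i then f t else f (t + d) with hf'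
    apply hmin m' (by omega)
    have hmi : i < m' := by omega
    refine ⟨f', ?_, ?_, ?_, ?_⟩
    · simp only [hf', if_pos (Nat.zero_le i)]
      exact hf0
    · simp only [hf', if_neg (by omega : ¬ m' ≤ i)]
      have : m' + d = m0 := by omega
      rw [this, hfm]
    · intro t ht
      by_cases h1 : t + 1 ≤ i
      · simp only [hf', if_pos h1, if_pos (by omega : t ≤ i)]
        exact hfadj t (by omega)
      · by_cases h2 : t ≤ i
        · have hti : t = i := by omega
          simp only [hf', if_pos h2, if_neg h1]
          rw [hti]
          have : i + 1 + d = j := by omega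
          rw [this]
          exact hadj
        · simp only [hf', if_neg h2, if_neg h1]
          have : t + 1 + d = t + d + 1 := by omega
          rw [this]
          exact hfadj (t + d) (by omega)
    · intro t ht0 htm
      by_cases h : t ≤ i
      · simp only [hf', if_pos h]
        exact hfT t ht0 (by omega)
      · simp only [hf', if_neg h]
        exact hfT (t + d) (by omega) (by omega)
  have hm2 : 2 ≤ m0 := by
    rcases Nat.lt_or_ge m0 2 with h | h
    · interval_cases m0
      · exact absurd (by rw [← hf0, hfm]) hne
      · exact absurd (by simpa [hf0, hfm] using hfadj 0 (by omega)) hxy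
    · exact h
  exact ⟨m0, f, ⟨hf0, hfm, hfadj, hfT⟩, hm2, fun i j hij hjm =>
    ⟨hchord i j hij hjm, fun h => h ▸ hfadj i (by omega)⟩, hinj⟩

end Part3a

section Part3b

/-- Adjacency avoiding the set `S`. -/
def Restr (G : SimpleGraph V) (S : Set V) (u v : V) : Prop := G.Adj u v ∧ u ∉ S ∧ v ∉ S

/-- Reachability by walks avoiding `S`. -/
def Reach (G : SimpleGraph V) (S : Set V) : V → V → Prop := Relation.ReflTransGen (Restr G S)

theorem restr_symm {G : SimpleGraph V} {S : Set V} : Symmetric (Restr G S) :=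
  fun _ _ ⟨h1, h2, h3⟩ => ⟨h1.symm, h3, h2⟩

theorem reach_symm {G : SimpleGraph V} {S : Set V} {u v : V} (h : Reach G S u v) :
    Reach G S v u := by
  haveI : Std.Symm (Restr G S) := ⟨fun _ _ h => restr_symm h⟩
  exact Std.Symm.symm (r := Relation.ReflTransGen (Restr G S)) _ _ h

theorem reach_trans {G : SimpleGraph V} {S : Set V} {u v w : V}
    (h1 : Reach G S u v) (h2 : Reach G S v w) : Reach G S u w := h1.trans h2

theorem reach_not_mem {G : SimpleGraph V} {S : Set V} {u v : V}
    (hu : u ∉ S) (h : Reach G S u v) : v ∉ S := by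
  induction h with
  | refl => exact hu
  | tail _ hr _ => exact hr.2.2

theorem exists_min_sep {V : Type u} [Fintype V] {G : SimpleGraph V} {a b : V}
    (hne : a ≠ b) (hnadj : ¬ G.Adj a b) :
    ∃ S : Finset V, a ∉ S ∧ b ∉ S ∧ ¬ Reach G ↑S a b ∧
      ∀ x ∈ S, (∃ u, Reach G ↑S a u ∧ G.Adj u x) ∧ (∃ u, Reach G ↑S b u ∧ G.Adj u x) := by
  classical
  set Sep : Finset V → Prop := fun S => a ∉ S ∧ b ∉ S ∧ ¬ Reach G ↑S a b with hSep
  have hex : ∃ n, ∃ S, Sep S ∧ S.card = n := by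
    refine ⟨(Finset.univ \ {a, b}).card, Finset.univ \ {a, b}, ⟨?_, ?_, ?_⟩, rfl⟩
    · simp
    · simp
    · intro hr
      rcases Relation.ReflTransGen.cases_head hr with h | ⟨c, hac, _⟩
      · exact hne h
      · obtain ⟨hadj, _, hc⟩ := hac
        have : c = a ∨ c = b := by
          by_contra h
          push_neg at h
          exact hc (by simp [h.1, h.2])
        rcases this with h | h
        · rw [h] at hadj
          exact G.irrefl hadj
        · rw [h] at hadj
          exact hnadj hadj
  obtain ⟨S, ⟨haS, hbS, hsep⟩, hScard⟩ := Nat.find_spec hex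
  have hmin : ∀ S' : Finset V, S'.card < S.card → ¬ Sep S' := by
    intro S' hlt hS'
    exact Nat.find_min hex (hScard ▸ hlt) ⟨S', hS', rfl⟩
  refine ⟨S, haS, hbS, hsep, ?_⟩
  -- neighbour facts from minimality
  have key : ∀ (p q : V), p ∉ S → q ∉ S → p ≠ q → ¬ G.Adj p q → ¬ Reach G ↑S p q →
      (∀ S' : Finset V, S'.card < S.card → ¬ (p ∉ S' ∧ q ∉ S' ∧ ¬ Reach G ↑S' p q)) →
      ∀ x ∈ S, ∃ u, Reach G ↑S p u ∧ G.Adj u x := by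
    intro p q hp hq hpq hpqadj hpqsep hminpq x hx
    by_contra hno
    push_neg at hno
    apply hminpq (S.erase x) (Finset.card_erase_lt_of_mem hx)
    refine ⟨fun h => hp (Finset.mem_of_mem_erase h), fun h => hq (Finset.mem_of_mem_erase h), ?_⟩
    intro hr
    have inv : ∀ v, Relation.ReflTransGen (Restr G ↑(S.erase x)) p v →
        Reach G ↑S p v ∨ ∃ u, Reach G ↑S p u ∧ G.Adj u x := by
      intro v hv
      induction hv with
      | refl => exact Or.inl Relation.ReflTransGen.refl
      | @tail c d hpc hcd ih =>
        rcases ih with ih | ih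
        · by_cases hdS : d ∈ S
          · have : d = x := by
              have := hcd.2.2
              simp only [Finset.coe_erase, Set.mem_diff, Set.mem_singleton_iff] at this
              push_neg at this
              exact this hdS
            exact Or.inr ⟨c, ih, this ▸ hcd.1⟩
          · have hcS : c ∉ S := reach_not_mem hp ih
            exact Or.inl (ih.tail ⟨hcd.1, hcS, hdS⟩)
        · exact Or.inr ih
    rcases inv q hr with h | ⟨u, hu1, hu2⟩
    · exact hpqsep h
    · exact hno u hu1 hu2
  intro x hx
  constructor
  · exact key a b haS hbS hne hnadj hsep (fun S' h1 h2 => hmin S' h1 h2) x hx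
  · refine key b a hbS haS hne.symm (fun h => hnadj h.symm) (fun h => hsep (reach_symm h)) ?_ x hx
    intro S' h1 h2
    exact hmin S' h1 ⟨h2.2.1, h2.1, fun h => h2.2.2 (reach_symm h)⟩

end Part3b

section Part3c1

theorem fin_sub_val_one {N : ℕ} (hN : 2 ≤ N) (u v : Fin N) :
    ((u - v : Fin N) : ℕ) = 1 ↔ (u.val = v.val + 1 ∨ (v.val = N - 1 ∧ u.val = 0)) := by
  have hu := u.isLt
  have hv := v.isLt
  rw [Fin.sub_def]
  show (N - v.val + u.val) % N = 1 ↔ _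
  rcases Nat.lt_or_ge (N - v.val + u.val) N with h | h
  · rw [Nat.mod_eq_of_lt h]
    omega
  · have h2 : N - v.val + u.val - N < N := by omega
    rw [Nat.mod_eq_sub_mod h, Nat.mod_eq_of_lt h2]
    omega

theorem cyc_adj {N : ℕ} (hN : 2 ≤ N) (u v : Fin N) :
    (SimpleGraph.cycleGraph N).Adj u v ↔
      (u.val = v.val + 1 ∨ v.val = u.val + 1 ∨ (v.val = N - 1 ∧ u.val = 0) ∨
        (u.val = N - 1 ∧ v.val = 0)) := by
  rw [SimpleGraph.cycleGraph_adj', fin_sub_val_one hN, fin_sub_val_one hN]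
  tauto

theorem reach_walk {G : SimpleGraph V} {S : Set V} {u v : V}
    (h : Relation.ReflTransGen (Restr G S) u v) :
    ∃ (m : ℕ) (g : ℕ → V), g 0 = u ∧ g m = v ∧ (∀ i, i < m → G.Adj (g i) (g (i+1))) ∧
      (∀ i, i ≤ m → Reach G S u (g i)) := by
  induction h with
  | refl =>
    exact ⟨0, fun _ => u, rfl, rfl, fun i hi => absurd hi (Nat.not_lt_zero i),
      fun i _ => Relation.ReflTransGen.refl⟩
  | @tail c d hpc hcd ih =>
    obtain ⟨m, g, hg0, hgm, hgadj, hgr⟩ := ih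
    refine ⟨m + 1, fun i => if i ≤ m then g i else d, ?_, ?_, ?_, ?_⟩
    · simp only [if_pos (Nat.zero_le m)]
      exact hg0
    · simp
    · intro i hi
      by_cases h1 : i + 1 ≤ m
      · simp only [if_pos h1, if_pos (by omega : i ≤ m)]
        exact hgadj i (by omega)
      · have him : i = m := by omega
        subst him
        simp only [if_neg h1, if_pos le_rfl, hgm]
        exact hcd.1
    · intro i hi
      by_cases h1 : i ≤ m
      · simp only [if_pos h1]
        exact hgr i h1
      · simp only [if_neg h1]
        exact (hgr m le_rfl).trans (hgm ▸ Relation.ReflTransGen.single hcd)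

theorem wk_exists {G : SimpleGraph V} {S : Set V} (p : V) {x y : V}
    (hx : ∃ u, Reach G S p u ∧ G.Adj u x) (hy : ∃ u, Reach G S p u ∧ G.Adj u y) :
    ∃ m f, Wk G {v | Reach G S p v} x y m f := by
  obtain ⟨u1, hu1r, hu1x⟩ := hx
  obtain ⟨u2, hu2r, hu2y⟩ := hy
  have h12 : Relation.ReflTransGen (Restr G S) u1 u2 := (reach_symm hu1r).trans hu2r
  obtain ⟨m, g, hg0, hgm, hgadj, hgr⟩ := reach_walk h12
  refine ⟨m + 2, fun i => if i = 0 then x else if i ≤ m + 1 then g (i - 1) else y,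
    by simp, by simp [show ¬(m+2 ≤ m+1) by omega, show m+2 ≠ 0 by omega], ?_, ?_⟩
  · intro i hi
    by_cases h0 : i = 0
    · subst h0
      simp only [if_pos rfl, if_neg (by omega : ¬(0+1 = 0)), if_pos (by omega : 0+1 ≤ m+1)]
      show G.Adj x (g 0)
      rw [hg0]
      exact hu1x.symm
    · by_cases h1 : i ≤ m
      · simp only [if_neg h0, if_pos (by omega : i ≤ m+1), if_neg (by omega : ¬(i+1 = 0)),
          if_pos (by omega : i+1 ≤ m+1)]
        have : i + 1 - 1 = (i - 1) + 1 := by omega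
        rw [this]
        exact hgadj (i - 1) (by omega)
      · have him : i = m + 1 := by omega
        subst him
        simp only [if_neg h0, if_pos le_rfl, if_neg (by omega : ¬(m+1+1 = 0)),
          if_neg (by omega : ¬(m+1+1 ≤ m+1))]
        have : m + 1 - 1 = m := by omega
        rw [this, hgm]
        exact hu2y
  · intro i hi0 hiM
    simp only [if_neg (by omega : ¬(i = 0)), if_pos (by omega : i ≤ m+1)]
    exact hu1r.trans (hgr (i-1) (by omega))

end Part3c1

section Part3c2

theorem sep_isClique {V : Type u} {G : SimpleGraph V} (hdec : IsDecomposable G)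
    {a b : V} {S : Set V} (ha : a ∉ S) (hb : b ∉ S) (hsep : ¬ Reach G S a b)
    (hnbr : ∀ x ∈ S, (∃ u, Reach G S a u ∧ G.Adj u x) ∧ (∃ u, Reach G S b u ∧ G.Adj u x)) :
    G.IsClique S := by
  intro x hx y hy hne
  by_contra hAdj
  have hAS : ∀ v : V, Reach G S a v → v ∉ S := fun v hv => reach_not_mem ha hv
  have hBS : ∀ v : V, Reach G S b v → v ∉ S := fun v hv => reach_not_mem hb hv
  have hABe : ∀ u v : V, Reach G S a u → Reach G S b v → ¬ G.Adj u v := by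
    intro u v hu hv hadj
    exact hsep ((hu.tail ⟨hadj, hAS u hu, hBS v hv⟩).trans (reach_symm hv))
  obtain ⟨mA, fA, ⟨hA0, hAm, hAadj, hAT⟩, hmA2, hAchord, hAinj⟩ :=
    exists_induced_walk hAdj (fun h => hAS y h hy) hne
      (wk_exists a ((hnbr x hx).1) ((hnbr y hy).1))
  obtain ⟨mB, fB, ⟨hB0, hBm, hBadj, hBT⟩, hmB2, hBchord, hBinj⟩ :=
    exists_induced_walk (fun h => hAdj h.symm) (fun h => hBS x h hx) hne.symm
      (wk_exists b ((hnbr y hy).2) ((hnbr x hx).2))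
  set N := mA + mB with hN
  have hN4 : 4 ≤ N := by omega
  have hN2 : 2 ≤ N := by omega
  set F : ℕ → V := fun t => if t ≤ mA then fA t else fB (t - mA) with hF
  have hFle : ∀ t, t ≤ mA → F t = fA t := fun t ht => if_pos ht
  have hFge : ∀ t, mA ≤ t → F t = fB (t - mA) := by
    intro t ht
    rcases eq_or_lt_of_le ht with h | h
    · subst h
      rw [hFle mA le_rfl, Nat.sub_self, hB0, hAm]
    · exact if_neg (by omega)
  have hF0 : F 0 = x := by rw [hFle 0 (Nat.zero_le _), hA0]
  have hFN : F N = x := by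
    rw [hFge N (by omega), hN, Nat.add_sub_cancel_left, hBm]
  have hFadj : ∀ t, t < N → G.Adj (F t) (F (t+1)) := by
    intro t ht
    by_cases h1 : t + 1 ≤ mA
    · rw [hFle t (by omega), hFle (t+1) h1]
      exact hAadj t (by omega)
    · have h2 : mA ≤ t := by omega
      rw [hFge t h2, hFge (t+1) (by omega)]
      have he : t + 1 - mA = (t - mA) + 1 := by omega
      rw [he]
      exact hBadj (t - mA) (by omega)
  have hFA : ∀ t, 0 < t → t < mA → Reach G S a (F t) := by
    intro t h1 h2
    rw [hFle t (le_of_lt h2)]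
    exact hAT t h1 h2
  have hFB : ∀ t, mA < t → t < N → Reach G S b (F t) := by
    intro t h1 h2
    rw [hFge t (le_of_lt h1)]
    exact hBT (t - mA) (by omega) (by omega)
  have hFinj : ∀ s t, s < t → t < N → F s ≠ F t := by
    intro s t hst ht heq
    by_cases h1 : t ≤ mA
    · rw [hFle s (by omega), hFle t h1] at heq
      exact hAinj s t hst h1 heq
    · by_cases h2 : mA ≤ s
      · rw [hFge s h2, hFge t (by omega)] at heq
        exact hBinj (s - mA) (t - mA) (by omega) (by omega) heq
      · have htB : Reach G S b (F t) := hFB t (by omega) ht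
        by_cases h0 : 0 < s
        · exact hsep ((hFA s h0 (by omega)).trans
            (heq ▸ (reach_symm htB) : Reach G S (F s) b))
        · have hs0 : s = 0 := by omega
          rw [hs0, hF0] at heq
          rw [hFge t (by omega)] at heq
          have hBx : fB (t - mA) ≠ fB mB := hBinj (t - mA) mB (by omega) le_rfl
          rw [hBm] at hBx
          exact hBx heq.symm
  have hFchord : ∀ s t, s < t → t < N → G.Adj (F s) (F t) → t = s + 1 ∨ (s = 0 ∧ t = N - 1) := by
    intro s t hst ht hadj
    by_cases h1 : t ≤ mA
    · left
      rw [hFle s (by omega), hFle t h1] at hadj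
      exact (hAchord s t hst h1).mp hadj
    · by_cases h2 : mA ≤ s
      · left
        rw [hFge s h2, hFge t (by omega)] at hadj
        have := (hBchord (s - mA) (t - mA) (by omega) (by omega)).mp hadj
        omega
      · have htB : Reach G S b (F t) := hFB t (by omega) ht
        by_cases h0 : 0 < s
        · exact absurd hadj (hABe _ _ (hFA s h0 (by omega)) htB)
        · have hs0 : s = 0 := by omega
          rw [hs0, hF0] at hadj
          rw [hFge t (by omega)] at hadj
          have := (hBchord (t - mA) mB (by omega) le_rfl).mp (by rw [hBm]; exact hadj.symm)
          exact Or.inr ⟨hs0, by omega⟩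
  refine (hdec N hN4).false ⟨⟨fun i => F i.val, ?_⟩, ?_⟩
  · intro i j hij
    rcases lt_trichotomy i.val j.val with h | h | h
    · exact absurd hij (hFinj _ _ h j.isLt)
    · exact Fin.ext h
    · exact absurd hij.symm (hFinj _ _ h i.isLt)
  · intro i j
    show G.Adj (F i.val) (F j.val) ↔ _
    rw [cyc_adj hN2]
    constructor
    · intro hadj
      rcases lt_trichotomy i.val j.val with h | h | h
      · rcases hFchord i.val j.val h j.isLt hadj with h2 | ⟨h2, h3⟩
        · exact Or.inr (Or.inl h2)
        · exact Or.inr (Or.inr (Or.inl ⟨h3, h2⟩))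
      · have : i = j := Fin.ext h
        subst this
        exact absurd hadj (G.irrefl)
      · rcases hFchord j.val i.val h i.isLt hadj.symm with h2 | ⟨h2, h3⟩
        · exact Or.inl h2
        · exact Or.inr (Or.inr (Or.inr ⟨h3, h2⟩))
    · intro hcyc
      rcases hcyc with h | h | ⟨h1, h2⟩ | ⟨h1, h2⟩
      · have hadj := hFadj j.val (by omega)
        rw [← h] at hadj
        exact hadj.symm
      · have hadj := hFadj i.val (by omega)
        rw [← h] at hadj
        exact hadj
      · have hadj := hFadj (N - 1) (by omega)
        rw [show N - 1 + 1 = N by omega, hFN] at hadj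
        rw [h1, h2, hF0]
        exact hadj.symm
      · have hadj := hFadj (N - 1) (by omega)
        rw [show N - 1 + 1 = N by omega, hFN] at hadj
        rw [h1, h2, hF0]
        exact hadj
end Part3c2

section Part3d

theorem dirac_aux : ∀ (k : ℕ) {V : Type u} [Fintype V] (G : SimpleGraph V),
    Fintype.card V ≤ k → IsDecomposable G →
    (∀ p q : V, p ≠ q → G.Adj p q) ∨
    (∃ v w : V, v ≠ w ∧ ¬ G.Adj v w ∧ IsSimplicial G v ∧ IsSimplicial G w) := by
  intro k
  induction k with
  | zero =>
    intro V _ G hcard _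
    haveI : IsEmpty V := Fintype.card_eq_zero_iff.mp (Nat.le_antisymm hcard (Nat.zero_le _))
    exact Or.inl (fun p q _ => (IsEmpty.false p).elim)
  | succ k ih =>
    intro V _ G hcard hdec
    classical
    by_cases hcomp : ∀ p q : V, p ≠ q → G.Adj p q
    · exact Or.inl hcomp
    · push_neg at hcomp
      obtain ⟨a, b, hne, hnadj⟩ := hcomp
      obtain ⟨S, haS, hbS, hsep, hnbr⟩ := exists_min_sep hne hnadj
      have haS' : a ∉ (↑S : Set V) := by simpa using haS
      have hbS' : b ∉ (↑S : Set V) := by simpa using hbS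
      have hclique : G.IsClique (↑S : Set V) :=
        sep_isClique hdec haS' hbS' hsep (fun x hx => hnbr x (by simpa using hx))
      have side : ∀ p q : V, p ∉ (↑S : Set V) → q ∉ (↑S : Set V) → q ≠ p → ¬ Reach G ↑S p q →
          ∃ v : V, Reach G ↑S p v ∧ IsSimplicial G v := by
        intro p q hpS hqS hqp hpq
        set W := {v : V // Reach G ↑S p v ∨ v ∈ (↑S : Set V)} with hW
        set G1 : SimpleGraph W := G.comap (Function.Embedding.subtype _) with hG1
        have hqW : ¬ (Reach G ↑S p q ∨ q ∈ (↑S : Set V)) := by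
          rintro (h | h)
          · exact hpq h
          · exact hqS h
        have hcardW : Fintype.card W ≤ k := by
          have h1 : Fintype.card W < Fintype.card V := Fintype.card_subtype_lt hqW
          omega
        -- transfer of simpliciality
        have transfer : ∀ (v : W), Reach G ↑S p v.val → IsSimplicial G1 v →
            IsSimplicial G v.val := by
          intro v hv hsimp u1 hu1 u2 hu2 hneu
          have mem : ∀ u : V, G.Adj v.val u → (Reach G ↑S p u ∨ u ∈ (↑S : Set V)) := by
            intro u hadj
            by_cases h : u ∈ (↑S : Set V)
            · exact Or.inr h
            · exact Or.inl (hv.tail ⟨hadj, reach_not_mem hpS hv, h⟩)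
          have hu1' : G.Adj v.val u1 := hu1
          have hu2' : G.Adj v.val u2 := hu2
          have : G1.Adj ⟨u1, mem u1 hu1'⟩ ⟨u2, mem u2 hu2'⟩ :=
            hsimp (by exact hu1') (by exact hu2') (fun h => hneu (congrArg Subtype.val h))
          exact this
        rcases ih G1 hcardW (isDecomposable_comap _ hdec) with hfull | ⟨v, w, hvw, hnvw, hsv, hsw⟩
        · -- G1 complete: p itself works
          have hp : Reach G ↑S p p := Relation.ReflTransGen.refl
          refine ⟨p, hp, transfer ⟨p, Or.inl hp⟩ hp ?_⟩
          intro u1 hu1 u2 hu2 hneu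
          exact hfull u1 u2 hneu
        · -- two nonadjacent simplicial vertices of G1; not both in S
          have hnot : ¬ (v.val ∈ (↑S : Set V) ∧ w.val ∈ (↑S : Set V)) := by
            rintro ⟨h1, h2⟩
            exact hnvw (hclique h1 h2 (fun h => hvw (Subtype.ext h)))
          by_cases hvS : v.val ∈ (↑S : Set V)
          · have hwS : ¬ w.val ∈ (↑S : Set V) := fun h => hnot ⟨hvS, h⟩
            have hwr : Reach G ↑S p w.val := w.prop.resolve_right hwS
            exact ⟨w.val, hwr, transfer w hwr hsw⟩
          · have hvr : Reach G ↑S p v.val := v.prop.resolve_right hvS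
            exact ⟨v.val, hvr, transfer v hvr hsv⟩
      obtain ⟨v, hva, hvs⟩ := side a b haS' hbS' hne.symm hsep
      obtain ⟨w, hwb, hws⟩ := side b a hbS' haS' hne (fun h => hsep (reach_symm h))
      refine Or.inr ⟨v, w, ?_, ?_, hvs, hws⟩
      · intro h
        exact hsep (hva.trans (h ▸ reach_symm hwb))
      · intro hadj
        exact hsep ((hva.tail ⟨hadj, reach_not_mem haS' hva, reach_not_mem hbS' hwb⟩).trans
          (reach_symm hwb))

/-- Dirac: every nonempty decomposable graph has a simplicial vertex. -/
theorem exists_simplicial {V : Type u} [Fintype V] [Nonempty V] (G : SimpleGraph V)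
    (hdec : IsDecomposable G) : ∃ v, IsSimplicial G v := by
  rcases dirac_aux (Fintype.card V) G le_rfl hdec with hfull | ⟨v, _, _, _, hv, _⟩
  · obtain ⟨v⟩ := ‹Nonempty V›
    exact ⟨v, fun u1 hu1 u2 hu2 hneu => hfull u1 u2 hneu⟩
  · exact ⟨v, hv⟩

end Part3d

section Part2

theorem peo_cons {V : Type u} {G : SimpleGraph V} {v : V} (hv : IsSimplicial G v)
    {k : ℕ} (σ' : {u : V // u ≠ v} ≃ Fin k)
    (hσ' : IsPerfectElimOrdering σ' (G.comap (Function.Embedding.subtype fun u => u ≠ v))) :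
    ∃ σ : V ≃ Fin (k+1), IsPerfectElimOrdering σ G := by
  classical
  obtain ⟨σ, hσv, hσu⟩ : ∃ σ : V ≃ Fin (k+1), σ v = 0 ∧
      ∀ u (h : u ≠ v), σ u = (σ' ⟨u, h⟩).succ := by
    refine ⟨⟨fun u => if h : u = v then 0 else (σ' ⟨u, h⟩).succ,
            fun i => if h : i = 0 then v else (σ'.symm (i.pred h)).val, ?_, ?_⟩, ?_, ?_⟩
    · intro u
      by_cases h : u = v
      · simp [h]
      · show (if h' : (if h : u = v then 0 else (σ' ⟨u, h⟩).succ) = 0 then v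
            else (σ'.symm ((if h : u = v then 0 else (σ' ⟨u, h⟩).succ).pred h')).val) = u
        rw [dif_neg h] at *
        rw [dif_neg (Fin.succ_ne_zero _)]
        simp
    · intro i
      by_cases h : i = 0
      · simp [h]
      · have hnv : (σ'.symm (i.pred h)).val ≠ v := (σ'.symm (i.pred h)).prop
        show (fun u => if h : u = v then (0 : Fin (k+1)) else (σ' ⟨u, h⟩).succ)
            (if h : i = 0 then v else (σ'.symm (i.pred h)).val) = i
        rw [dif_neg h]
        show (if h' : (σ'.symm (i.pred h)).val = v then (0 : Fin (k+1))
            else (σ' ⟨(σ'.symm (i.pred h)).val, h'⟩).succ) = i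
        rw [dif_neg hnv]
        have he : (⟨(σ'.symm (i.pred h)).val, hnv⟩ : {u : V // u ≠ v}) = σ'.symm (i.pred h) :=
          Subtype.ext rfl
        rw [he, Equiv.apply_symm_apply, Fin.succ_pred]
    · simp
    · intro u h
      simp [h]
  refine ⟨σ, ?_⟩
  intro j
  have hjw : σ (σ.symm j) = j := σ.apply_symm_apply j
  by_cases hwv : σ.symm j = v
  · -- j = 0
    rw [hwv]
    intro p hp q hq hpq
    rcases hp with hp | hp
    · rcases hq with hq | hq
      · exact absurd (hp.trans hq.symm) hpq
      · rw [Set.mem_singleton_iff] at hp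
        rw [hp]
        exact hq.2.symm
    · rcases hq with hq | hq
      · rw [Set.mem_singleton_iff] at hq
        rw [hq]
        exact hp.2
      · exact hv hp.2.symm hq.2.symm hpq
  · -- j = (σ' w').succ
    set w := σ.symm j with hwdef
    set w' : {u : V // u ≠ v} := ⟨w, hwv⟩ with hw'
    have hj : j = (σ' w').succ := by rw [← hjw, hσu w hwv]
    set i : Fin k := σ' w' with hi
    have hsymm : σ'.symm i = w' := σ'.symm_apply_apply w'
    have key : ∀ p : V, p ∈ ({w} ∪ {u : V | (j : ℕ) < (σ u : ℕ) ∧ G.Adj u w} : Set V) →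
        ∃ hp : p ≠ v, (⟨p, hp⟩ : {u : V // u ≠ v}) ∈
          ({σ'.symm i} ∪ {u' : {u : V // u ≠ v} |
            (i : ℕ) < (σ' u' : ℕ) ∧ (G.comap (Function.Embedding.subtype fun u => u ≠ v)).Adj u' (σ'.symm i)} :
            Set {u : V // u ≠ v}) := by
      intro p hp
      rcases hp with hp | hp
      · rw [Set.mem_singleton_iff] at hp
        subst hp
        refine ⟨hwv, Or.inl ?_⟩
        rw [hsymm]
        rfl
      · obtain ⟨hlt, hadj⟩ := hp
        have hpv : p ≠ v := by
          intro h
          rw [h, hσv] at hlt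
          simp at hlt
        refine ⟨hpv, Or.inr ⟨?_, ?_⟩⟩
        · have h1 : (σ p : ℕ) = (σ' ⟨p, hpv⟩ : ℕ) + 1 := by
            rw [hσu p hpv, Fin.val_succ]
          have h2 : (j : ℕ) = (i : ℕ) + 1 := by rw [hj, Fin.val_succ]
          omega
        · rw [hsymm]
          exact hadj
    intro p hp q hq hpq
    obtain ⟨hp1, hp2⟩ := key p hp
    obtain ⟨hq1, hq2⟩ := key q hq
    exact hσ' i hp2 hq2 (fun h => hpq (congrArg Subtype.val h))

theorem exists_peo : ∀ (k : ℕ) {V : Type u} [Fintype V] (G : SimpleGraph V),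
    Fintype.card V = k → IsDecomposable G →
    ∃ σ : V ≃ Fin k, IsPerfectElimOrdering σ G := by
  intro k
  induction k with
  | zero =>
    intro V _ G hcard _
    haveI : IsEmpty V := Fintype.card_eq_zero_iff.mp hcard
    exact ⟨Equiv.equivOfIsEmpty V (Fin 0), fun j => j.elim0⟩
  | succ k ih =>
    intro V _ G hcard hdec
    classical
    haveI : Nonempty V := Fintype.card_pos_iff.mp (by omega)
    obtain ⟨v, hv⟩ := exists_simplicial G hdec
    have hcard' : Fintype.card {u : V // u ≠ v} = k := by
      have h1 : Fintype.card {u : V // u = v} = 1 := Fintype.card_subtype_eq v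
      have h2 := Fintype.card_subtype_compl (fun u : V => u = v)
      rw [h1, hcard] at h2
      exact h2
    obtain ⟨σ', hσ'⟩ := ih (G.comap (Function.Embedding.subtype fun u => u ≠ v)) hcard'
      (isDecomposable_comap _ hdec)
    exact peo_cons hv σ' hσ'

end Part2

theorem isGB_of_isDecomposable' [Fintype V] (G : SimpleGraph V)
    (hdec : IsDecomposable G) : IsGB G := by
  obtain ⟨σ, hσ⟩ := exists_peo (Fintype.card V) G rfl hdec
  exact ⟨_, σ, isGBOrdering_of_peo hσ⟩


/-- every decomposable (chordal) graph is a Generalized Bartlett graph. -/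
theorem isGB_of_isDecomposable [Fintype V] (G : SimpleGraph V)
    (hdec : IsDecomposable G) : IsGB G := by
  obtain ⟨σ, hσ⟩ := exists_peo (Fintype.card V) G rfl hdec
  exact ⟨_, σ, isGBOrdering_of_peo hσ⟩
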